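/- If σ + ρ₂μ_w < μ_w̄(1-ρ₁), then the quadratic B₁x² + B₂x + B₃ (with B₁ = φ_w(σ+ρ₁μ_w), B₂ = (σ+ρ₂μ_w-μ_w̄(1-ρ₁))φ_w, B₃ = (1-R¹)(μ_w+σ)φ_w̄) has two distinct positive real roots whenever R* < R¹ < 1, where R* = 1 - μ_w(σ+ρ₂μ_w-μ_w̄(1-ρ₁))² R_{0w} / (4μ_w̄(μ_w+σ)(σ+ρ₁μ_w) R_{0w̄}) and R¹ = R_{0w}(1-ρ₂)μ_w/(R_{0w̄}(μ_w+σ)). -/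

import Mathlib

set_option maxHeartbeats 1000000 in
/-- Backward bifurcation regime: when `σ + ρ₂μ_w < μ_w̄(1-ρ₁)` and
`R* < R¹ < 1`, the quadratic has two distinct positive real roots. -/
theorem stmt_19 (φw φwb σ μw μwb ψ μa ρ1 ρ2 : ℝ)
    (hφw : 0 < φw) (hφwb : 0 < φwb) (hσ : 0 < σ) (hμw : 0 < μw) (hμwb : 0 < μwb)
    (hψ : 0 < ψ) (hμa : 0 < μa)
    (hρ1 : ρ1 ∈ Set.Icc (0:ℝ) 1) (hρ2 : ρ2 ∈ Set.Icc (0:ℝ) 1)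
    (R0w R0wb R1 Rstar B1 B2 B3 : ℝ)
    (hR0w : R0w = φw * ψ / (2 * μw * (μa + ψ)))
    (hR0wb : R0wb = φwb * ψ / (2 * μwb * (μa + ψ)))
    (hR1 : R1 = R0w * (1 - ρ2) * μw / (R0wb * (μw + σ)))
    (hRstar : Rstar = 1 - μw * (σ + ρ2 * μw - μwb * (1 - ρ1)) ^ 2 * R0w /
      (4 * μwb * (μw + σ) * (σ + ρ1 * μw) * R0wb))
    (hB1 : B1 = φw * (σ + ρ1 * μw))
    (hB2 : B2 = (σ + ρ2 * μw - μwb * (1 - ρ1)) * φw)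
    (hB3 : B3 = (1 - R1) * (μw + σ) * φwb)
    (hcond : σ + ρ2 * μw < μwb * (1 - ρ1))
    (hlo : Rstar < R1) (hhi : R1 < 1) :
    ∃ x y : ℝ, 0 < x ∧ 0 < y ∧ x ≠ y ∧
      B1 * x ^ 2 + B2 * x + B3 = 0 ∧ B1 * y ^ 2 + B2 * y + B3 = 0 := by
  obtain ⟨hρ10, hρ11⟩ := hρ1
  obtain ⟨hρ20, hρ21⟩ := hρ2
  have hs1 : 0 < σ + ρ1 * μw := by nlinarith
  have hmσ : 0 < μw + σ := by linarith
  have hB1pos : 0 < B1 := by rw [hB1]; positivity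
  have hB2neg : B2 < 0 := by rw [hB2]; nlinarith
  have h1R : 0 < 1 - R1 := by linarith
  have hB3pos : 0 < B3 := by rw [hB3]; positivity
  have hμaψ : 0 < μa + ψ := by linarith
  have hkey : 4 * B1 * B3 < B2 ^ 2 := by
    rw [hB1, hB2, hB3]
    rw [hRstar, hR0w, hR0wb] at hlo
    have h2 : 1 - R1 < μw * (σ + ρ2 * μw - μwb * (1 - ρ1)) ^ 2 *
        (φw * ψ / (2 * μw * (μa + ψ))) /
        (4 * μwb * (μw + σ) * (σ + ρ1 * μw) * (φwb * ψ / (2 * μwb * (μa + ψ)))) := by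
      linarith
    have heq : μw * (σ + ρ2 * μw - μwb * (1 - ρ1)) ^ 2 *
        (φw * ψ / (2 * μw * (μa + ψ))) /
        (4 * μwb * (μw + σ) * (σ + ρ1 * μw) * (φwb * ψ / (2 * μwb * (μa + ψ)))) =
        (σ + ρ2 * μw - μwb * (1 - ρ1)) ^ 2 * φw /
        (4 * φwb * (μw + σ) * (σ + ρ1 * μw)) := by
      field_simp
    rw [heq] at h2
    rw [lt_div_iff₀ (by positivity)] at h2
    have h3 := mul_lt_mul_of_pos_left h2 hφw
    linarith
  set D := B2 ^ 2 - 4 * B1 * B3 with hD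
  have hDpos : 0 < D := by linarith
  set s := Real.sqrt D with hs
  have hsq : s ^ 2 = D := Real.sq_sqrt hDpos.le
  have hspos : 0 < s := Real.sqrt_pos.mpr hDpos
  have hslt : s < -B2 := by nlinarith [hsq, hspos, hB1pos, hB3pos]
  have hB1ne : (2 * B1) ≠ 0 := by positivity
  have quad : ∀ t : ℝ, B1 * t ^ 2 + B2 * t + B3 = ((2 * B1 * t + B2) ^ 2 - s ^ 2) / (4 * B1) := by
    intro t
    rw [hsq]
    field_simp
    ring
  have hx : 2 * B1 * ((-B2 + s) / (2 * B1)) + B2 = s := by field_simp; ring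
  have hy : 2 * B1 * ((-B2 - s) / (2 * B1)) + B2 = -s := by field_simp; ring
  refine ⟨(-B2 + s) / (2 * B1), (-B2 - s) / (2 * B1), div_pos (by linarith) (by linarith),
    div_pos (by linarith) (by linarith), ?_, ?_, ?_⟩
  · intro h
    rw [div_eq_div_iff (by positivity) (by positivity)] at h
    have h2 := mul_right_cancel₀ hB1ne h
    linarith
  · rw [quad, hx]; simp
  · rw [quad, hy]; ring_nf
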